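/- Let α ∈ [0,1] and let u, v, p₀, p₁ be unit vectors in ℂ². Then |⟨u,p₀⟩|² + α·|⟨v,p₀⟩|² + |⟨u,p₁⟩|² − α·|⟨v,p₁⟩|² ≤ 1 + √(1 + α²). -/

import Mathlib

open Matrix

local notation "⟪" x ", " y "⟫" => @inner ℂ _ _ x y

private lemma key_real (t τ X y r : ℝ) (ht : 0 ≤ t) (hτ : 0 ≤ τ) (hX : 0 ≤ X) (hy : 0 ≤ y)
    (hr : 0 ≤ r) (h1 : t^2 + τ^2 = 1) (h4 : X^2 + y^2 = 1) (h3 : r ≤ τ * y) :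
    τ^2 * X^2 + 2*t*X*r - r^2 ≤ τ := by
  have hτ1 : τ ≤ 1 := by nlinarith [sq_nonneg t, sq_nonneg (τ-1)]
  by_cases h : t*X ≤ τ*y
  · have hsq : X^2 ≤ τ^2 := by nlinarith [mul_nonneg ht hX, mul_nonneg hτ hy]
    nlinarith [sq_nonneg (r - t*X), mul_nonneg hτ (sub_nonneg.2 hτ1)]
  · push_neg at h
    have key : (2*t*X*y + τ*(X^2-y^2))^2 + (2*X*y*τ - (X^2-y^2)*t)^2
        = (t^2+τ^2)*(X^2+y^2)^2 := by ring
    rw [h1, h4] at key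
    have h5 : 2*t*X*y + τ*(X^2-y^2) ≤ 1 := by
      nlinarith [sq_nonneg (2*X*y*τ - (X^2-y^2)*t)]
    have h6 : 0 ≤ (τ*y - r) * (2*t*X - r - τ*y) := by
      apply mul_nonneg <;> nlinarith
    nlinarith [mul_nonneg hτ (by linarith : (0:ℝ) ≤ 1 - (2*t*X*y + τ*(X^2-y^2)))]

section IP

variable {E : Type*} [NormedAddCommGroup E] [InnerProductSpace ℂ E]

private lemma sum_bound (u p₀ p₁ : E) (hu : ‖u‖ = 1) (hp₀ : ‖p₀‖ = 1) (hp₁ : ‖p₁‖ = 1) :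
    ‖⟪u, p₀⟫‖^2 + ‖⟪u, p₁⟫‖^2 ≤ 1 + ‖⟪p₀, p₁⟫‖ := by
  set x := ⟪u, p₀⟫ with hx
  set y := ⟪u, p₁⟫ with hy
  set a := (starRingEnd ℂ x) • p₀ with ha
  set b := (starRingEnd ℂ y) • p₁ with hb
  set S : ℝ := ‖x‖^2 + ‖y‖^2 with hS
  set t : ℝ := ‖⟪p₀, p₁⟫‖ with htd
  have hS0 : 0 ≤ S := by positivity
  have ht0 : 0 ≤ t := norm_nonneg _
  have econj : ∀ z : ℂ, (starRingEnd ℂ) z * z = ((‖z‖^2 : ℝ) : ℂ) := fun z => by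
    rw [mul_comm, Complex.mul_conj, Complex.normSq_eq_norm_sq]
  have h1 : ⟪u, a + b⟫ = (S : ℂ) := by
    rw [inner_add_right, ha, hb, inner_smul_right, inner_smul_right, ← hx, ← hy,
      econj, econj, hS]
    push_cast
    try ring
  have hna : ‖a‖ = ‖x‖ := by
    rw [ha, norm_smul, hp₀]; simp
  have hnb : ‖b‖ = ‖y‖ := by
    rw [hb, norm_smul, hp₁]; simp
  have hab : ⟪a, b⟫ = x * (starRingEnd ℂ y) * ⟪p₀, p₁⟫ := by
    rw [ha, hb, inner_smul_left, inner_smul_right]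
    simp; ring
  have hre : RCLike.re ⟪a, b⟫ ≤ ‖x‖ * ‖y‖ * t := by
    calc RCLike.re ⟪a, b⟫ ≤ ‖⟪a, b⟫‖ := RCLike.re_le_norm _
    _ = ‖x‖ * ‖y‖ * t := by rw [hab, norm_mul, norm_mul, RCLike.norm_conj]
  have hw2 : ‖a + b‖^2 ≤ S + 2 * ‖x‖ * ‖y‖ * t := by
    have := @norm_add_sq ℂ _ _ _ _ a b
    rw [hna, hnb] at this
    rw [this, hS]; nlinarith [hre]
  have hSw : S ≤ ‖a + b‖ := by
    have : S = ‖⟪u, a + b⟫‖ := by rw [h1]; simp [abs_of_nonneg hS0]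
    rw [this]
    calc ‖⟪u, a + b⟫‖ ≤ ‖u‖ * ‖a + b‖ := norm_inner_le_norm _ _
    _ = ‖a + b‖ := by rw [hu, one_mul]
  have hS2 : S^2 ≤ S + S * t := by
    nlinarith [hw2, hSw, sq_nonneg (‖x‖ - ‖y‖), norm_nonneg (a+b)]
  nlinarith [hS2, hS0, ht0]

private lemma diff_bound (v p₀ p₁ : E) (hv : ‖v‖ = 1) (hp₀ : ‖p₀‖ = 1) (hp₁ : ‖p₁‖ = 1) :
    ‖⟪v, p₀⟫‖^2 - ‖⟪v, p₁⟫‖^2 ≤ Real.sqrt (1 - ‖⟪p₀, p₁⟫‖^2) := by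
  set s := ⟪p₀, p₁⟫ with hs
  set q : E := p₁ - s • p₀ with hq
  set x := ⟪v, p₀⟫ with hx
  set z := ⟪v, q⟫ with hz
  set t : ℝ := ‖s‖ with htd
  set X : ℝ := ‖x‖ with hX
  set r : ℝ := ‖z‖ with hr
  have ht0 : 0 ≤ t := norm_nonneg _
  -- ⟪p₀, q⟫ = 0
  have hp0q : ⟪p₀, q⟫ = 0 := by
    rw [hq, inner_sub_right, inner_smul_right, ← hs,
      @inner_self_eq_norm_sq_to_K ℂ _ _ _ _ p₀, hp₀]
    simp
  -- ‖q‖² = 1 - t²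
  have hq2 : ‖q‖^2 = 1 - t^2 := by
    have hconj : ⟪p₁, p₀⟫ = (starRingEnd ℂ) s := by rw [hs, inner_conj_symm]
    have := @norm_sub_sq ℂ _ _ _ _ p₁ (s • p₀)
    rw [inner_smul_right, hconj, Complex.mul_conj, Complex.normSq_eq_norm_sq] at this
    rw [hq, this, hp₁, norm_smul, hp₀]
    simp [htd, RCLike.ofReal_re, ← Complex.ofReal_pow]
    ring
  set τ : ℝ := ‖q‖ with hτd
  have hτ0 : 0 ≤ τ := norm_nonneg _
  have h1 : t^2 + τ^2 = 1 := by rw [hτd, hq2]; ring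
  -- decomposition of ⟪v,p₁⟫
  have hvp1 : ⟪v, p₁⟫ = s * x + z := by
    have hp1d : p₁ = s • p₀ + q := by rw [hq]; abel
    rw [hp1d, inner_add_right, inner_smul_right, ← hx, ← hz]
  -- lower bound on ‖⟪v,p₁⟫‖²
  have hd : (t*X - r)^2 ≤ ‖⟪v, p₁⟫‖^2 := by
    have habs : |‖s * x‖ - ‖z‖| ≤ ‖s * x + z‖ := by
      have := abs_norm_sub_norm_le (s * x) (-z)
      simpa [sub_neg_eq_add] using this
    have hsx : ‖s * x‖ = t * X := by rw [norm_mul]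
    rw [hvp1]
    rw [hsx] at habs
    have := abs_nonneg (t*X - r)
    nlinarith [habs, abs_nonneg (t*X - r), sq_abs (t*X - r), norm_nonneg (s*x+z),
      abs_le.1 habs]
  -- Bessel: r ≤ τ * y with y² = 1 - X²
  set w : E := v - (starRingEnd ℂ x) • p₀ with hw
  set y : ℝ := ‖w‖ with hyd
  have hy0 : 0 ≤ y := norm_nonneg _
  have hy2 : X^2 + y^2 = 1 := by
    have := @norm_sub_sq ℂ _ _ _ _ v ((starRingEnd ℂ x) • p₀)
    rw [inner_smul_right, ← hx, mul_comm ((starRingEnd ℂ) x) x, Complex.mul_conj,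
      Complex.normSq_eq_norm_sq] at this
    rw [hyd, hw, this, hv, norm_smul, hp₀, RCLike.norm_conj]
    simp [hX, RCLike.ofReal_re, ← Complex.ofReal_pow]
    ring
  have hzw : z = ⟪w, q⟫ := by
    rw [hw, inner_sub_left, inner_smul_left, hp0q, ← hz]
    simp
  have h3 : r ≤ τ * y := by
    rw [hr, hzw]
    calc ‖⟪w, q⟫‖ ≤ ‖w‖ * ‖q‖ := norm_inner_le_norm _ _
    _ = τ * y := by rw [hyd, hτd]; ring
  -- finish
  have hsqrt : Real.sqrt (1 - t^2) = τ := by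
    rw [show (1:ℝ) - t^2 = τ^2 by linarith, Real.sqrt_sq hτ0]
  rw [hsqrt]
  have key := key_real t τ X y r ht0 hτ0 (norm_nonneg _) hy0 (norm_nonneg _) h1 hy2 h3
  nlinarith [hd, key]

private lemma full_bound (α : ℝ) (hα : α ∈ Set.Icc (0 : ℝ) 1) (u v p₀ p₁ : E)
    (hu : ‖u‖ = 1) (hv : ‖v‖ = 1) (hp₀ : ‖p₀‖ = 1) (hp₁ : ‖p₁‖ = 1) :
    ‖⟪u, p₀⟫‖^2 + α * ‖⟪v, p₀⟫‖^2 + ‖⟪u, p₁⟫‖^2 - α * ‖⟪v, p₁⟫‖^2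
      ≤ 1 + Real.sqrt (1 + α^2) := by
  obtain ⟨hα0, hα1⟩ := hα
  set t : ℝ := ‖⟪p₀, p₁⟫‖ with htd
  have ht0 : 0 ≤ t := norm_nonneg _
  have ht1 : t ≤ 1 := by
    calc t ≤ ‖p₀‖ * ‖p₁‖ := norm_inner_le_norm _ _
    _ = 1 := by rw [hp₀, hp₁, one_mul]
  have h1 := sum_bound u p₀ p₁ hu hp₀ hp₁
  have h2 := diff_bound v p₀ p₁ hv hp₀ hp₁
  set σ : ℝ := Real.sqrt (1 - t^2) with hσd
  have hσ0 : 0 ≤ σ := Real.sqrt_nonneg _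
  have hσ2 : σ^2 = 1 - t^2 := Real.sq_sqrt (by nlinarith)
  set m : ℝ := Real.sqrt (1 + α^2) with hmd
  have hm0 : 0 ≤ m := Real.sqrt_nonneg _
  have hm2 : m^2 = 1 + α^2 := Real.sq_sqrt (by positivity)
  have hcs : t + α * σ ≤ m := by
    nlinarith [sq_nonneg (t*α - σ), sq_nonneg (t + α*σ), mul_nonneg hα0 hσ0]
  have h2' : α * (‖⟪v, p₀⟫‖^2 - ‖⟪v, p₁⟫‖^2) ≤ α * σ :=
    mul_le_mul_of_nonneg_left h2 hα0
  nlinarith [h1, h2', hcs]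

end IP

/-- The final estimate in the proof of the measure-and-prepare bound (Appendix B):
for `α ∈ [0,1]` and unit vectors `u, v, p₀, p₁ ∈ ℂ²`,
`|⟨u,p₀⟩|² + α|⟨v,p₀⟩|² + |⟨u,p₁⟩|² − α|⟨v,p₁⟩|² ≤ 1 + √(1+α²)`. -/
theorem four_vector_inequality
    (α : ℝ) (hα : α ∈ Set.Icc (0 : ℝ) 1)
    (u v p₀ p₁ : Fin 2 → ℂ)
    (hu : ∑ i, Complex.normSq (u i) = 1)
    (hv : ∑ i, Complex.normSq (v i) = 1)
    (hp₀ : ∑ i, Complex.normSq (p₀ i) = 1)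
    (hp₁ : ∑ i, Complex.normSq (p₁ i) = 1) :
    Complex.normSq (star u ⬝ᵥ p₀) + α * Complex.normSq (star v ⬝ᵥ p₀)
      + Complex.normSq (star u ⬝ᵥ p₁) - α * Complex.normSq (star v ⬝ᵥ p₁)
    ≤ 1 + Real.sqrt (1 + α ^ 2) := by
  have norm_of (w : Fin 2 → ℂ) (hw : ∑ i, Complex.normSq (w i) = 1) :
      ‖(WithLp.equiv 2 (Fin 2 → ℂ)).symm w‖ = 1 := by
    rw [EuclideanSpace.norm_eq]
    simp only [WithLp.equiv_symm_apply, PiLp.toLp_apply]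
    rw [show ∀ (f : Fin 2 → ℝ), (∑ i, f i ^ 2) = ∑ i, (fun i => f i ^2) i from fun f => rfl]
    have : ∀ i, ‖w i‖ ^ 2 = Complex.normSq (w i) := fun i => by
      rw [Complex.sq_norm]
    simp_rw [this, hw, Real.sqrt_one]
  have key := full_bound α hα
    ((WithLp.equiv 2 (Fin 2 → ℂ)).symm u) ((WithLp.equiv 2 (Fin 2 → ℂ)).symm v)
    ((WithLp.equiv 2 (Fin 2 → ℂ)).symm p₀) ((WithLp.equiv 2 (Fin 2 → ℂ)).symm p₁)
    (norm_of u hu) (norm_of v hv) (norm_of p₀ hp₀) (norm_of p₁ hp₁)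
  simp only [WithLp.equiv_symm_apply] at key
  rw [EuclideanSpace.inner_toLp_toLp, EuclideanSpace.inner_toLp_toLp,
    EuclideanSpace.inner_toLp_toLp, EuclideanSpace.inner_toLp_toLp] at key
  have hnorm : ∀ (z : ℂ), ‖z‖^2 = Complex.normSq z := fun z => by
    rw [Complex.sq_norm]
  simp_rw [hnorm] at key
  rw [dotProduct_comm p₀, dotProduct_comm p₀, dotProduct_comm p₁, dotProduct_comm p₁] at key
  convert key using 2
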